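/- Unbiasedness of the random-batch estimator: let N = m·R with m ≥ 2, R ≥ 1. Let σ be a uniformly distributed random permutation of {0,…,N−1}, and assign particle p to batch B_p = {q : ⌊σ(q)/m⌋ = ⌊σ(p)/m⌋}. Then for any fixed index p and any family of vectors a_q in a real vector space (q ≠ p), the expectation of (R(N−1)/(N−R)) · Σ_{q ≠ p, q ∈ B_p} a_q equals Σ_{q ≠ p} a_q. -/

import Mathlib

open Finset

/-- There is a permutation sending any two distinct points to any two distinct points. -/
lemma exists_perm_two {α : Type*} [DecidableEq α] {x y x' y' : α}
    (hxy : x ≠ y) (hxy' : x' ≠ y') :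
    ∃ τ : Equiv.Perm α, τ x = x' ∧ τ y = y' := by
  refine ⟨Equiv.swap (Equiv.swap x x' y) y' * Equiv.swap x x', ?_, ?_⟩
  · have h1 : Equiv.swap x x' y ≠ x' := by
      intro h
      exact hxy ((Equiv.swap x x').injective (h.trans (Equiv.swap_apply_left x x').symm)).symm
    simp [Equiv.Perm.mul_apply, Equiv.swap_apply_left,
      Equiv.swap_apply_of_ne_of_ne (Ne.symm h1) hxy']
  · simp [Equiv.Perm.mul_apply, Equiv.swap_apply_left]

/-- Fibers of `σ ↦ (σ p, σ q)` all have the same cardinality. -/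
lemma fiber_const {N : ℕ} (p q : Fin N) {x y x' y' : Fin N}
    (hxy : x ≠ y) (hxy' : x' ≠ y') :
    (Finset.univ.filter fun σ : Equiv.Perm (Fin N) => σ p = x ∧ σ q = y).card =
    (Finset.univ.filter fun σ : Equiv.Perm (Fin N) => σ p = x' ∧ σ q = y').card := by
  obtain ⟨τ, hτx, hτy⟩ := exists_perm_two hxy hxy'
  refine Finset.card_nbij' (fun σ => τ * σ) (fun σ => τ⁻¹ * σ) ?_ ?_ ?_ ?_
  · intro σ hσ
    simp only [Finset.mem_coe, mem_filter, mem_univ, true_and] at hσ ⊢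
    simp [Equiv.Perm.mul_apply, hσ.1, hσ.2, hτx, hτy]
  · intro σ hσ
    simp only [Finset.mem_coe, mem_filter, mem_univ, true_and] at hσ ⊢
    constructor
    · simp [Equiv.Perm.mul_apply, hσ.1, ← hτx]
    · simp [Equiv.Perm.mul_apply, hσ.2, ← hτy]
  · intro σ _; simp [mul_assoc, ← mul_assoc τ⁻¹ τ σ]
  · intro σ _; simp [← mul_assoc]

lemma nat_div_eq_iff {m n k : ℕ} (hm : 0 < m) :
    n / m = k ↔ k * m ≤ n ∧ n < (k + 1) * m := by
  constructor
  · rintro rfl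
    exact ⟨Nat.div_mul_le_self n m, (Nat.div_lt_iff_lt_mul hm).mp (Nat.lt_succ_self _)⟩
  · rintro ⟨h1, h2⟩
    have h1' : k ≤ n / m := (Nat.le_div_iff_mul_le hm).mpr h1
    have h2' : n / m < k + 1 := (Nat.div_lt_iff_lt_mul hm).mpr h2
    omega

/-- Each batch has exactly `m` elements. -/
lemma block_card {m R N : ℕ} (hm : 0 < m) (hN : N = m * R) (x : Fin N) :
    (Finset.univ.filter fun y : Fin N => (y : ℕ) / m = (x : ℕ) / m).card = m := by
  set k := (x : ℕ) / m with hk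
  have hkR : k < R := by
    have hx : (x : ℕ) < m * R := hN ▸ x.isLt
    exact Nat.div_lt_of_lt_mul hx
  have : (Finset.univ.filter fun y : Fin N => (y : ℕ) / m = k).card
      = ((Finset.range N).filter fun n => n / m = k).card := by
    refine Finset.card_nbij' (fun y => (y : ℕ)) (fun n => ⟨n % N, Nat.mod_lt _ x.pos⟩) ?_ ?_ ?_ ?_
    · intro y hy
      simp only [Finset.mem_coe, mem_filter, mem_univ, true_and, mem_range] at hy ⊢
      exact ⟨y.isLt, hy⟩
    · intro n hn
      simp only [Finset.mem_coe, mem_filter, mem_range] at hn ⊢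
      have hmod : n % N = n := Nat.mod_eq_of_lt hn.1
      simp [hmod, hn.2]
    · intro y _; exact Fin.ext (by simp [Nat.mod_eq_of_lt y.isLt])
    · intro n hn
      simp only [Finset.mem_coe, mem_filter, mem_range] at hn
      simp [Nat.mod_eq_of_lt hn.1]
  rw [this]
  have heq : (Finset.range N).filter (fun n => n / m = k) = Finset.Ico (k * m) ((k + 1) * m) := by
    ext n
    simp only [mem_filter, mem_range, Finset.mem_Ico]
    rw [nat_div_eq_iff hm]
    have : (k + 1) * m ≤ N := by
      rw [hN]
      calc (k + 1) * m ≤ R * m := Nat.mul_le_mul_right m hkR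
        _ = m * R := Nat.mul_comm R m
    omega
  rw [heq, Nat.card_Ico]
  ring_nf
  omega

lemma sum_indicator_smul {V : Type*} [AddCommGroup V] [Module ℝ V]
    {ι : Type*} [Fintype ι] [DecidableEq ι] (P : ι → Prop) [DecidablePred P] (v : V) :
    ∑ i : ι, (if P i then v else 0) = ((Finset.univ.filter P).card : ℕ) • v := by
  rw [← Finset.sum_filter, Finset.sum_const]

theorem random_batch_unbiased {V : Type*} [AddCommGroup V] [Module ℝ V]
    (m R N : ℕ) (hm : 2 ≤ m) (hR : 1 ≤ R) (hN : N = m * R)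
    (p : Fin N) (a : Fin N → V) :
    ((Nat.factorial N : ℝ))⁻¹ •
        ∑ σ : Equiv.Perm (Fin N),
          (((R : ℝ) * ((N : ℝ) - 1)) / ((N : ℝ) - (R : ℝ))) •
            ∑ q ∈ Finset.univ.filter
                (fun q : Fin N => q ≠ p ∧ (σ q : ℕ) / m = (σ p : ℕ) / m), a q
      = ∑ q ∈ Finset.univ.filter (fun q : Fin N => q ≠ p), a q := by
  have hN2 : 2 ≤ N := by
    calc 2 ≤ m := hm
    _ = m * 1 := (Nat.mul_one m).symm
    _ ≤ m * R := Nat.mul_le_mul_left m hR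
    _ = N := hN.symm
  set c : ℝ := ((R : ℝ) * ((N : ℝ) - 1)) / ((N : ℝ) - (R : ℝ)) with hc
  -- For each q ≠ p, count permutations with σ q in the same batch as σ p
  have key : ∀ q : Fin N, q ≠ p →
      ((Nat.factorial N : ℝ))⁻¹ * (c *
        ((Finset.univ.filter fun σ : Equiv.Perm (Fin N) =>
          (σ q : ℕ) / m = (σ p : ℕ) / m).card : ℝ)) = 1 := by
    intro q hq
    -- the constant fiber cardinality
    set K : ℕ := (Finset.univ.filter fun σ : Equiv.Perm (Fin N) =>
      σ p = p ∧ σ q = q).card with hK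
    have hKpos : 0 < K := by
      rw [hK]
      refine Finset.card_pos.mpr ⟨1, ?_⟩
      simp
    have hd : ∀ σ : Equiv.Perm (Fin N), σ p ≠ σ q := fun σ h =>
      hq (σ.injective h).symm
    -- total count: N! = (N*N - N) * K
    have htotal : Nat.factorial N = (N * N - N) * K := by
      have := Finset.card_eq_sum_card_fiberwise
        (f := fun σ : Equiv.Perm (Fin N) => (σ p, σ q))
        (s := Finset.univ) (t := Finset.univ.offDiag)
        (fun σ _ => Finset.mem_offDiag.mpr ⟨mem_univ _, mem_univ _, hd σ⟩)
      rw [Finset.card_univ, Fintype.card_perm, Fintype.card_fin] at this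
      rw [this]
      have hconst : ∀ z ∈ (Finset.univ : Finset (Fin N)).offDiag,
          (Finset.univ.filter fun σ : Equiv.Perm (Fin N) => (σ p, σ q) = z).card = K := by
        intro z hz
        have hz' := (Finset.mem_offDiag.mp hz).2.2
        have : (Finset.univ.filter fun σ : Equiv.Perm (Fin N) => (σ p, σ q) = z)
            = Finset.univ.filter fun σ => σ p = z.1 ∧ σ q = z.2 := by
          apply Finset.filter_congr
          intro σ _
          simp [Prod.ext_iff]
        rw [this, hK]
        exact fiber_const p q hz' (Ne.symm hq)
      rw [Finset.sum_congr rfl hconst, Finset.sum_const, Finset.offDiag_card,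
        Finset.card_univ, Fintype.card_fin, smul_eq_mul]
    -- batch count: S = (N * (m-1)) * K
    have hS : (Finset.univ.filter fun σ : Equiv.Perm (Fin N) =>
        (σ q : ℕ) / m = (σ p : ℕ) / m).card = (N * (m - 1)) * K := by
      have hmaps : ∀ σ ∈ (Finset.univ.filter fun σ : Equiv.Perm (Fin N) =>
          (σ q : ℕ) / m = (σ p : ℕ) / m), (σ p, σ q) ∈
          (Finset.univ.offDiag.filter fun z : Fin N × Fin N =>
            (z.2 : ℕ) / m = (z.1 : ℕ) / m) := by
        intro σ hσ
        simp only [mem_filter, mem_univ, true_and] at hσ ⊢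
        exact ⟨Finset.mem_offDiag.mpr ⟨mem_univ _, mem_univ _, hd σ⟩, hσ⟩
      have := Finset.card_eq_sum_card_fiberwise hmaps
      rw [this]
      have hconst : ∀ z ∈ (Finset.univ.offDiag.filter fun z : Fin N × Fin N =>
          (z.2 : ℕ) / m = (z.1 : ℕ) / m),
          ((Finset.univ.filter fun σ : Equiv.Perm (Fin N) =>
            (σ q : ℕ) / m = (σ p : ℕ) / m).filter
            fun σ => (σ p, σ q) = z).card = K := by
        intro z hz
        simp only [mem_filter] at hz
        have hz' := (Finset.mem_offDiag.mp hz.1).2.2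
        have : ((Finset.univ.filter fun σ : Equiv.Perm (Fin N) =>
            (σ q : ℕ) / m = (σ p : ℕ) / m).filter fun σ => (σ p, σ q) = z)
            = Finset.univ.filter fun σ => σ p = z.1 ∧ σ q = z.2 := by
          rw [Finset.filter_filter]
          apply Finset.filter_congr
          intro σ _
          simp only [mem_univ, Prod.ext_iff]
          constructor
          · rintro ⟨_, h1, h2⟩; exact ⟨h1, h2⟩
          · rintro ⟨h1, h2⟩
            refine ⟨?_, h1, h2⟩
            rw [h1, h2]; exact hz.2
        rw [this, hK]
        exact fiber_const p q hz' (Ne.symm hq)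
      rw [Finset.sum_congr rfl hconst, Finset.sum_const, smul_eq_mul]
      congr 1
      -- card of the pair set = N * (m-1)
      have hmaps2 : ∀ z ∈ (Finset.univ.offDiag.filter fun z : Fin N × Fin N =>
          (z.2 : ℕ) / m = (z.1 : ℕ) / m), z.1 ∈ (Finset.univ : Finset (Fin N)) :=
        fun z _ => mem_univ _
      rw [Finset.card_eq_sum_card_fiberwise hmaps2]
      have hfib : ∀ x ∈ (Finset.univ : Finset (Fin N)),
          ((Finset.univ.offDiag.filter fun z : Fin N × Fin N =>
            (z.2 : ℕ) / m = (z.1 : ℕ) / m).filter fun z => z.1 = x).card = m - 1 := by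
        intro x _
        have hcard : ((Finset.univ.offDiag.filter fun z : Fin N × Fin N =>
            (z.2 : ℕ) / m = (z.1 : ℕ) / m).filter fun z => z.1 = x).card
            = ((Finset.univ.filter fun y : Fin N =>
                (y : ℕ) / m = (x : ℕ) / m).erase x).card := by
          refine Finset.card_nbij' (fun z => z.2) (fun y => (x, y)) ?_ ?_ ?_ ?_
          · intro z hz
            simp only [Finset.mem_coe, mem_filter, Finset.mem_offDiag, mem_univ, true_and,
              Finset.mem_erase] at hz ⊢
            obtain ⟨⟨hne, hdiv⟩, hx⟩ := hz
            subst hx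
            exact ⟨fun h => hne h.symm, hdiv⟩
          · intro y hy
            simp only [Finset.mem_coe, Finset.mem_erase, mem_filter, mem_univ, true_and,
              Finset.mem_offDiag] at hy ⊢
            exact ⟨⟨fun h => hy.1 h.symm, hy.2⟩, trivial⟩
          · intro z hz
            simp only [Finset.mem_coe, mem_filter] at hz
            exact Prod.ext_iff.mpr ⟨hz.2.symm, rfl⟩
          · intro y _; rfl
        rw [hcard, Finset.card_erase_of_mem (by simp), block_card (by omega) hN]
      rw [Finset.sum_congr rfl hfib, Finset.sum_const, Finset.card_univ,
        Fintype.card_fin, smul_eq_mul]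
    -- now the real arithmetic
    rw [hS, htotal, hc]
    have hKne : (K : ℝ) ≠ 0 := Nat.cast_ne_zero.mpr hKpos.ne'
    have hNR : (N : ℝ) - (R : ℝ) = (R : ℝ) * ((m : ℝ) - 1) := by
      rw [hN]; push_cast; ring
    have hm1 : ((N * (m - 1)) * K : ℕ) = (N : ℕ) * (m - 1) * K := rfl
    have hcast1 : ((N * N - N : ℕ) : ℝ) = (N : ℝ) * ((N : ℝ) - 1) := by
      have h1 : N ≤ N * N := Nat.le_mul_of_pos_left N (by omega)
      push_cast [Nat.cast_sub h1]
      ring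
    have hcast2 : (((N * (m - 1)) * K : ℕ) : ℝ) = (N : ℝ) * ((m : ℝ) - 1) * (K : ℝ) := by
      have h1 : (1 : ℕ) ≤ m := by omega
      push_cast [Nat.cast_sub h1]
      ring
    push_cast [hcast2]
    rw [hcast1, hNR]
    have hNne : (N : ℝ) ≠ 0 := by positivity
    have hN1ne : (N : ℝ) - 1 ≠ 0 := by
      have : (2 : ℝ) ≤ (N : ℝ) := by exact_mod_cast hN2
      linarith
    have hm1ne : (m : ℝ) - 1 ≠ 0 := by
      have : (2 : ℝ) ≤ (m : ℝ) := by exact_mod_cast hm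
      linarith
    have hRne : (R : ℝ) ≠ 0 := by positivity
    field_simp
  -- rearrange the sum
  rw [← Finset.smul_sum]
  have step1 : ∀ σ : Equiv.Perm (Fin N),
      (∑ q ∈ Finset.univ.filter
          (fun q : Fin N => q ≠ p ∧ (σ q : ℕ) / m = (σ p : ℕ) / m), a q)
      = ∑ q ∈ Finset.univ.filter (fun q : Fin N => q ≠ p),
          (if (σ q : ℕ) / m = (σ p : ℕ) / m then a q else 0) := by
    intro σ
    rw [← Finset.filter_filter, Finset.sum_filter]
  simp_rw [step1]
  rw [Finset.sum_comm]
  have step2 : ∀ q ∈ Finset.univ.filter (fun q : Fin N => q ≠ p),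
      (∑ σ : Equiv.Perm (Fin N),
        (if (σ q : ℕ) / m = (σ p : ℕ) / m then a q else 0))
      = ((Finset.univ.filter fun σ : Equiv.Perm (Fin N) =>
          (σ q : ℕ) / m = (σ p : ℕ) / m).card : ℝ) • a q := by
    intro q _
    rw [← Finset.sum_filter, Finset.sum_const]
    exact (Nat.cast_smul_eq_nsmul ℝ _ _).symm
  rw [Finset.sum_congr rfl step2, Finset.smul_sum, Finset.smul_sum]
  refine Finset.sum_congr rfl fun q hq => ?_
  have hq' : q ≠ p := (Finset.mem_filter.mp hq).2
  rw [smul_smul, smul_smul, mul_assoc, key q hq', one_smul]
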